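/- The expected number of guesses of the algorithm that queries keys in decreasing order of probability until it finds a key drawn from D, namely E[T] = ∑_{i=1}^{N} i · p_i, satisfies 2^{H_{1/2}(D)} / (1 + log₂ N) ≤ ∑_{i=1}^{N} i · p_i ≤ 2^{H_{1/2}(D)}. -/

import Mathlib

open Finset

lemma harm_le : ∀ n : ℕ, 1 ≤ n → ∑ i ∈ Finset.range n, (1:ℝ)/(i+1) ≤ 1 + Real.log n := by
  intro n hn
  induction n with
  | zero => omega
  | succ m ih =>
    rcases Nat.eq_or_lt_of_le hn with h1 | h1
    · simp [← h1]
    · have hm : 1 ≤ m := by omega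
      have hmpos : (0:ℝ) < m := by exact_mod_cast hm
      rw [Finset.sum_range_succ]
      have key : (1:ℝ)/(m+1) ≤ Real.log (m+1) - Real.log m := by
        have h2 : Real.log ((m:ℝ)/(m+1)) ≤ (m:ℝ)/(m+1) - 1 :=
          Real.log_le_sub_one_of_pos (by positivity)
        have h3 : Real.log ((m:ℝ)/(m+1)) = Real.log m - Real.log (m+1) :=
          Real.log_div (ne_of_gt hmpos) (by positivity)
        have h4 : (m:ℝ)/(m+1) - 1 = -(1/(m+1)) := by field_simp; ring
        rw [h3, h4] at h2
        linarith
      have := ih hm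
      push_cast
      push_cast at this
      linarith

theorem classical_key_guessing {K : Type*} [Fintype K] [Nonempty K]
    (P : K → ℝ) (hpos : ∀ x, 0 < P x) (hle : ∀ x, P x ≤ 1)
    (hsum : ∑ x, P x = 1)
    (e : Fin (Fintype.card K) ≃ K)
    (hsort : ∀ i j : Fin (Fintype.card K), i ≤ j → P (e j) ≤ P (e i)) :
    (2 : ℝ) ^ (2 * Real.logb 2 (∑ x, P x ^ ((1 : ℝ) / 2))) /
        (1 + Real.logb 2 (Fintype.card K)) ≤
      ∑ i : Fin (Fintype.card K), ((i : ℝ) + 1) * P (e i) ∧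
    ∑ i : Fin (Fintype.card K), ((i : ℝ) + 1) * P (e i) ≤
      (2 : ℝ) ^ (2 * Real.logb 2 (∑ x, P x ^ ((1 : ℝ) / 2))) := by
  have hN1 : 1 ≤ Fintype.card K := Fintype.card_pos
  set S : ℝ := ∑ x, P x ^ ((1 : ℝ) / 2) with hSdef
  set E : ℝ := ∑ i : Fin (Fintype.card K), ((i : ℝ) + 1) * P (e i) with hEdef
  have hS_fin : S = ∑ i : Fin (Fintype.card K), Real.sqrt (P (e i)) := by
    rw [hSdef, ← e.sum_comp (fun x => P x ^ ((1:ℝ)/2))]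
    exact Finset.sum_congr rfl fun i _ => (Real.sqrt_eq_rpow _).symm
  have hSpos : 0 < S := by
    rw [hS_fin]
    apply Finset.sum_pos (fun i _ => Real.sqrt_pos.2 (hpos _))
    exact Finset.univ_nonempty
  have hpow : (2 : ℝ) ^ (2 * Real.logb 2 S) = S ^ 2 := by
    rw [mul_comm, Real.rpow_mul (by norm_num), Real.rpow_logb (by norm_num) (by norm_num) hSpos]
    norm_num
  have hEnonneg : 0 ≤ E := Finset.sum_nonneg fun i _ => by
    have h0 : (0:ℝ) ≤ (i:ℝ) := by exact_mod_cast Nat.zero_le (i : ℕ)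
    have h1 := (hpos (e i)).le
    positivity
  rw [hpow]
  constructor
  · -- lower bound
    have hCS : S ^ 2 ≤ E * ∑ i : Fin (Fintype.card K), (1:ℝ)/((i:ℝ)+1) := by
      rw [hS_fin]
      refine Finset.sum_sq_le_sum_mul_sum_of_sq_eq_mul _
        (f := fun i : Fin (Fintype.card K) => ((i : ℝ) + 1) * P (e i))
        (g := fun i : Fin (Fintype.card K) => (1:ℝ)/((i:ℝ)+1))
        (fun i _ => ?_) (fun i _ => ?_) (fun i _ => ?_)
      · have h0 : (0:ℝ) ≤ (i:ℝ) := by exact_mod_cast Nat.zero_le (i : ℕ)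
        have h1 := (hpos (e i)).le
        positivity
      · have h0 : (0:ℝ) ≤ (i:ℝ) := by exact_mod_cast Nat.zero_le (i : ℕ)
        positivity
      · rw [Real.sq_sqrt (hpos (e i)).le]
        have h0 : (0:ℝ) ≤ (i:ℝ) := by exact_mod_cast Nat.zero_le (i : ℕ)
        have : ((i:ℝ)+1) ≠ 0 := by positivity
        field_simp
    have hH : ∑ i : Fin (Fintype.card K), (1:ℝ)/((i:ℝ)+1)
        ≤ 1 + Real.logb 2 (Fintype.card K) := by
      have h1 : ∑ i : Fin (Fintype.card K), (1:ℝ)/((i:ℝ)+1)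
          = ∑ i ∈ Finset.range (Fintype.card K), (1:ℝ)/((i:ℝ)+1) :=
        Fin.sum_univ_eq_sum_range (fun k : ℕ => (1:ℝ)/((k:ℝ)+1)) _
      have h2 := harm_le (Fintype.card K) hN1
      have h3 : Real.log (Fintype.card K) ≤ Real.logb 2 (Fintype.card K) := by
        have hlogN : 0 ≤ Real.log (Fintype.card K : ℝ) :=
          Real.log_nonneg (by exact_mod_cast hN1)
        have hlog2 : 0 < Real.log 2 := Real.log_pos (by norm_num)
        have hlog2le : Real.log 2 ≤ 1 := by
          have := Real.log_le_sub_one_of_pos (by norm_num : (0:ℝ) < 2)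
          linarith
        rw [Real.logb, le_div_iff₀ hlog2]
        nlinarith
      rw [h1]; linarith
    have hden : (0:ℝ) < 1 + Real.logb 2 (Fintype.card K) := by
      have : 0 ≤ Real.logb 2 (Fintype.card K : ℝ) :=
        Real.logb_nonneg (by norm_num) (by exact_mod_cast hN1)
      linarith
    rw [div_le_iff₀ hden]
    calc S ^ 2 ≤ E * ∑ i : Fin (Fintype.card K), (1:ℝ)/((i:ℝ)+1) := hCS
      _ ≤ E * (1 + Real.logb 2 (Fintype.card K)) := mul_le_mul_of_nonneg_left hH hEnonneg
  · -- upper bound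
    have key : ∀ i : Fin (Fintype.card K),
        ((i:ℝ)+1) * P (e i) ≤ S * Real.sqrt (P (e i)) := by
      intro i
      have h1 : ((i:ℝ)+1) * Real.sqrt (P (e i)) ≤ S := by
        rw [hS_fin]
        calc ((i:ℝ)+1) * Real.sqrt (P (e i))
            = ∑ _j ∈ Finset.Iic i, Real.sqrt (P (e i)) := by
              rw [Finset.sum_const, Fin.card_Iic]
              push_cast
              ring
          _ ≤ ∑ j ∈ Finset.Iic i, Real.sqrt (P (e j)) :=
              Finset.sum_le_sum fun j hj =>
                Real.sqrt_le_sqrt (hsort j i (Finset.mem_Iic.1 hj))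
          _ ≤ ∑ j : Fin (Fintype.card K), Real.sqrt (P (e j)) :=
              Finset.sum_le_sum_of_subset_of_nonneg (Finset.subset_univ _)
                (fun j _ _ => Real.sqrt_nonneg _)
      calc ((i:ℝ)+1) * P (e i)
          = (((i:ℝ)+1) * Real.sqrt (P (e i))) * Real.sqrt (P (e i)) := by
            rw [mul_assoc, Real.mul_self_sqrt (hpos _).le]
        _ ≤ S * Real.sqrt (P (e i)) :=
            mul_le_mul_of_nonneg_right h1 (Real.sqrt_nonneg _)
    calc E ≤ ∑ i : Fin (Fintype.card K), S * Real.sqrt (P (e i)) :=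
        Finset.sum_le_sum fun i _ => key i
      _ = S * ∑ i : Fin (Fintype.card K), Real.sqrt (P (e i)) := by rw [Finset.mul_sum]
      _ = S ^ 2 := by rw [← hS_fin]; ring
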